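/- For an element f and an ideal I of a commutative ring A, one has V(I) ∩ D(f) = ∅ if and only if f belongs to the real radical √[R]{I}, i.e., if and only if there exist m ∈ ℕ and a sum of squares Σ b_i² in A with f^{2m} + Σ b_i² ∈ I. -/

import Mathlib

/-- An ideal `J` of a commutative ring is *real* if whenever a finite sum of squares
`∑ i, a i ^ 2` lies in `J`, each `a i` lies in `J`. -/
def IsRealIdeal {A : Type*} [CommRing A] (J : Ideal A) : Prop :=
  ∀ (n : ℕ) (a : Fin n → A), (∑ i, a i ^ 2) ∈ J → ∀ i, a i ∈ J

/-- The real Zariski spectrum: the set of real prime ideals of `A`. -/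
structure RealSpectrum (A : Type*) [CommRing A] where
  asIdeal : Ideal A
  isPrime : asIdeal.IsPrime
  isReal : IsRealIdeal asIdeal

namespace RealSpectrum

variable {A : Type*} [CommRing A]

instance (p : RealSpectrum A) : p.asIdeal.IsPrime := p.isPrime

/-- `V(I)`: the set of real prime ideals containing `I`. -/
def zeroLocus (I : Ideal A) : Set (RealSpectrum A) := {p | I ≤ p.asIdeal}

/-- `D(f)`: the set of real prime ideals not containing `f`. -/
def basicOpen (f : A) : Set (RealSpectrum A) := {p | f ∉ p.asIdeal}

end RealSpectrum

section Aux

variable {A : Type*} [CommRing A]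

theorem IsSumSq.mul_self_mul' {a t : A} (ht : IsSumSq t) : IsSumSq (a * a * t) := by
  induction ht with
  | zero => simpa using IsSumSq.zero
  | @sq_add c S hS ih =>
    have : a * a * (c * c + S) = (a * c) * (a * c) + a * a * S := by ring
    rw [this]
    exact IsSumSq.sq_add _ ih

theorem IsSumSq.mul' {s t : A} (hs : IsSumSq s) (ht : IsSumSq t) : IsSumSq (s * t) := by
  induction hs with
  | zero => simpa using IsSumSq.zero
  | @sq_add a S hS ih =>
    rw [add_mul]
    exact IsSumSq.add (IsSumSq.mul_self_mul' ht) ih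

theorem IsSumSq.exists_fin {s : A} (hs : IsSumSq s) :
    ∃ (n : ℕ) (b : Fin n → A), s = ∑ i, b i ^ 2 := by
  induction hs with
  | zero => exact ⟨0, ![], by simp⟩
  | @sq_add a S hS ih =>
    obtain ⟨n, b, rfl⟩ := ih
    refine ⟨n + 1, Fin.cons a b, ?_⟩
    rw [Fin.sum_univ_succ]
    simp [sq]

theorem isSumSq_sum_sq {n : ℕ} (b : Fin n → A) : IsSumSq (∑ i, b i ^ 2) := by
  have : ∑ i, b i ^ 2 = ∑ i, b i * b i := by simp [sq]
  rw [this]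
  exact IsSumSq.sum_mul_self _ _

/-- The multiplicative monoid of elements of the form `f^(2m) + (sum of squares)`. -/
def realSaturation (f : A) : Submonoid A where
  carrier := {x | ∃ (m : ℕ) (s : A), IsSumSq s ∧ x = f ^ (2 * m) + s}
  one_mem' := ⟨0, 0, IsSumSq.zero, by simp⟩
  mul_mem' := by
    rintro x y ⟨m, s, hs, rfl⟩ ⟨k, t, ht, rfl⟩
    refine ⟨m + k, f ^ (2 * m) * t + f ^ (2 * k) * s + s * t, ?_, by ring⟩
    refine IsSumSq.add (IsSumSq.add ?_ ?_) (hs.mul' ht)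
    · have : f ^ (2 * m) * t = f ^ m * f ^ m * t := by ring
      rw [this]; exact ht.mul_self_mul'
    · have : f ^ (2 * k) * s = f ^ k * f ^ k * s := by ring
      rw [this]; exact hs.mul_self_mul'

theorem add_isSumSq_mem_realSaturation {f x s : A} (hx : x ∈ realSaturation f)
    (hs : IsSumSq s) : x + s ∈ realSaturation f := by
  obtain ⟨m, t, ht, rfl⟩ := hx
  exact ⟨m, t + s, ht.add hs, by ring⟩

end Aux

open RealSpectrum in
/-- `V(I) ∩ D(f) = ∅` if and only if `f ∈ √[R]{I}`, i.e. iff there are `m` and a sum of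
squares `∑ bᵢ²` with `f ^ (2 * m) + ∑ bᵢ² ∈ I`. -/
theorem zeroLocus_inter_basicOpen_eq_empty_iff {A : Type*} [CommRing A]
    (f : A) (I : Ideal A) :
    zeroLocus I ∩ basicOpen f = ∅ ↔
      ∃ (m n : ℕ) (b : Fin n → A), f ^ (2 * m) + ∑ i, b i ^ 2 ∈ I := by
  constructor
  · intro hempty
    by_contra hne
    push_neg at hne
    -- `I` is disjoint from the saturation monoid
    have hdisj : Disjoint (I : Set A) (realSaturation f : Set A) := by
      rw [Set.disjoint_left]
      rintro x hxI ⟨m, s, hs, rfl⟩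
      obtain ⟨n, b, rfl⟩ := hs.exists_fin
      exact hne m n b hxI
    -- Zorn: maximal ideal disjoint from the monoid
    obtain ⟨p, hIp, hp⟩ := zorn_le_nonempty₀
      {p : Ideal A | Disjoint (p : Set A) (realSaturation f : Set A)}
      (fun c hc hc' x hx ↦ by
        cases isEmpty_or_nonempty c
        · exact ⟨I, hdisj, fun J hJ ↦ isEmptyElim (⟨J, hJ⟩ : c)⟩
        refine ⟨sSup c, Set.disjoint_left.mpr fun y hy ↦ ?_, fun _ ↦ le_sSup⟩
        have ⟨q, hq⟩ := (Submodule.mem_iSup_of_directed _ hc'.directed).mp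
          (sSup_eq_iSup' c ▸ hy)
        exact Set.disjoint_left.mp (hc q.2) hq) I hdisj
    have hmax : ∀ J : Ideal A, p < J → ¬ Disjoint (J : Set A) (realSaturation f : Set A) :=
      fun _ ↦ hp.not_prop_of_gt
    have hpdisj : Disjoint (p : Set A) (realSaturation f : Set A) := hp.1
    have hprime : p.IsPrime := Ideal.isPrime_of_maximally_disjoint p _ hpdisj hmax
    -- p is real
    have hreal : IsRealIdeal p := by
      intro n a hsum i
      by_contra hai
      have hlt : p < p ⊔ Ideal.span {a i} :=
        Submodule.lt_sup_iff_notMem.mpr hai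
      have := hmax _ hlt
      rw [Set.not_disjoint_iff] at this
      obtain ⟨t, htJ, htS⟩ := this
      rw [SetLike.mem_coe, Submodule.mem_sup] at htJ
      obtain ⟨q, hq, z, hz, rfl⟩ := htJ
      rw [Ideal.mem_span_singleton] at hz
      obtain ⟨c, rfl⟩ := hz
      -- the element t^2 + c^2 * (∑_{j ≠ i} a j ^ 2) lies in p ∩ S
      set s' : A := ∑ j ∈ Finset.univ.erase i, a j ^ 2 with hs'
      have hs'sum : s' + a i ^ 2 = ∑ j, a j ^ 2 := by
        rw [hs', Finset.sum_erase_add]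
        exact Finset.mem_univ i
      have hs'sq : IsSumSq s' := by
        have : s' = ∑ j ∈ Finset.univ.erase i, a j * a j := by
          simp [hs', sq]
        rw [this]
        exact IsSumSq.sum_mul_self _ _
      have key : (q + a i * c) ^ 2 + (c * c) * s'
          = q * (q + 2 * (a i * c)) + (c * c) * (s' + a i ^ 2) := by ring
      have hmemp : (q + a i * c) ^ 2 + (c * c) * s' ∈ p := by
        rw [key, hs'sum]
        exact p.add_mem (p.mul_mem_right _ hq)
          (p.mul_mem_left _ hsum)
      have hmemS : (q + a i * c) ^ 2 + (c * c) * s' ∈ realSaturation f := by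
        have h2 : (q + a i * c) ^ 2 = (q + a i * c) * (q + a i * c) := sq _
        rw [h2]
        exact add_isSumSq_mem_realSaturation (Submonoid.mul_mem _ htS htS)
          (hs'sq.mul_self_mul')
      exact Set.disjoint_left.mp hpdisj hmemp hmemS
    -- f ∉ p
    have hfp : f ∉ p := by
      intro hf
      have : f ^ (2 * 1) + 0 ∈ realSaturation f := ⟨1, 0, IsSumSq.zero, rfl⟩
      have hfin : f ^ (2 * 1) + 0 ∈ p := by
        simpa using p.pow_mem_of_mem hf 2 (by norm_num)
      exact Set.disjoint_left.mp hpdisj hfin this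
    have : (⟨p, hprime, hreal⟩ : RealSpectrum A) ∈ zeroLocus I ∩ basicOpen f :=
      ⟨hIp, hfp⟩
    rw [hempty] at this
    exact this
  · rintro ⟨m, n, b, hmem⟩
    rw [Set.eq_empty_iff_forall_notMem]
    rintro p ⟨hIp, hfp⟩
    have hmemp : f ^ (2 * m) + ∑ i, b i ^ 2 ∈ p.asIdeal := hIp hmem
    have hsum : (∑ i, (Fin.cons (f ^ m) b : Fin (n + 1) → A) i ^ 2) ∈ p.asIdeal := by
      rw [Fin.sum_univ_succ]
      have : (f ^ m) ^ 2 = f ^ (2 * m) := by rw [← pow_mul, mul_comm]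
      simpa [this] using hmemp
    have := p.isReal _ _ hsum 0
    simp only [Fin.cons_zero] at this
    exact hfp (p.isPrime.mem_of_pow_mem m this)
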